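/- arXiv:1912.09276 — 3 statements merged into one kernel-verified Lean document; each statement's English description precedes it below -/
import Mathlib

section
/- Let μ ≥ 0, L > 0, and let f : V → ℝ be differentiable, μ-convex, with L-Lipschitz gradient and global minimizer x*. Let γ₀ > 0, x₀, v₀ ∈ V, and generate sequences by: α_k > 0 with Lα_k² = γ_k(2 + α_k), β_k = 1/(Lα_k), (y_k - x_k)/α_k = v_k - y_k - β_k∇f(x_k), (v_{k+1} - v_k)/α_k = (μ/γ_k)(y_k - v_{k+1}) - (1/γ_k)∇f(y_k), (γ_{k+1} - γ_k)/α_k = μ - γ_{k+1}, x_{k+1} = y_k - (1/L)∇f(y_k). Define λ₀ = 1, λ_k = ∏_{i=0}^{k-1} 1/(1+α_i), L_k = f(x_k) - f(x*) + (γ_k/2)‖v_k - x*‖², R₀ = 0, R_k = (λ_k/2)·∑_{i=0}^{k-1} (α_iβ_i/λ_i)‖∇f(x_i)‖², and E_k = L_k + R_k. Then for every k ≥ 0, E_{k+1} ≤ E_k/(1 + α_k). -/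
open scoped RealInnerProductSpace

set_option maxRecDepth 4000
set_option maxHeartbeats 1000000

lemma my_descent {V : Type*} [NormedAddCommGroup V] [InnerProductSpace ℝ V] [CompleteSpace V]
    (L : ℝ) (hL : 0 < L) (f : V → ℝ) (f' : V → V)
    (hdiff : ∀ z, HasGradientAt f (f' z) z)
    (hlip : ∀ z w : V, ‖f' z - f' w‖ ≤ L * ‖z - w‖) (z w : V) :
    f w ≤ f z + ⟪f' z, w - z⟫ + L / 2 * ‖w - z‖ ^ 2 := by
  set ψ : ℝ → ℝ := fun t =>
    f (z + t • (w - z)) - t * ⟪f' z, w - z⟫ - L / 2 * t ^ 2 * ‖w - z‖ ^ 2 with hψdef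
  have hψ : ∀ t : ℝ, HasDerivAt ψ
      (⟪f' (z + t • (w - z)), w - z⟫ - ⟪f' z, w - z⟫ - L / 2 * (2 * t) * ‖w - z‖ ^ 2) t := by
    intro t
    have h1 : HasDerivAt (fun t : ℝ => z + t • (w - z)) (w - z) t := by
      simpa using ((hasDerivAt_id t).smul_const (w - z)).const_add z
    have h2 := (hdiff (z + t • (w - z))).hasFDerivAt.comp_hasDerivAt t h1
    simp only [InnerProductSpace.toDual_apply_apply] at h2
    have h3 : HasDerivAt (fun t : ℝ => t * ⟪f' z, w - z⟫) ⟪f' z, w - z⟫ t := by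
      simpa using (hasDerivAt_id t).mul_const _
    have h4 : HasDerivAt (fun t : ℝ => L / 2 * t ^ 2 * ‖w - z‖ ^ 2)
        (L / 2 * (2 * t) * ‖w - z‖ ^ 2) t := by
      have h := ((hasDerivAt_pow 2 t).const_mul (L / 2)).mul_const (‖w - z‖ ^ 2)
      exact h.congr_deriv (by ring)
    exact (h2.sub h3).sub h4
  have hdiffψ : Differentiable ℝ ψ := fun t => (hψ t).differentiableAt
  have hanti : AntitoneOn ψ (Set.Icc (0 : ℝ) 1) := by
    apply antitoneOn_of_deriv_nonpos (convex_Icc 0 1) hdiffψ.continuous.continuousOn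
      hdiffψ.differentiableOn
    intro t ht
    rw [interior_Icc] at ht
    rw [(hψ t).deriv]
    have hb : ⟪f' (z + t • (w - z)) - f' z, w - z⟫ ≤ L * t * ‖w - z‖ ^ 2 := by
      calc ⟪f' (z + t • (w - z)) - f' z, w - z⟫ ≤ ‖f' (z + t • (w - z)) - f' z‖ * ‖w - z‖ :=
            real_inner_le_norm _ _
        _ ≤ (L * ‖(z + t • (w - z)) - z‖) * ‖w - z‖ := by
            apply mul_le_mul_of_nonneg_right (hlip _ _) (norm_nonneg _)
        _ = L * t * ‖w - z‖ ^ 2 := by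
            rw [add_sub_cancel_left, norm_smul]
            simp [Real.norm_eq_abs, abs_of_pos ht.1]; ring
    have : ⟪f' (z + t • (w - z)), w - z⟫ - ⟪f' z, w - z⟫ ≤ L * t * ‖w - z‖ ^ 2 := by
      rw [inner_sub_left] at hb; linarith [hb]
    nlinarith [this]
  have h01 : ψ 1 ≤ ψ 0 := hanti (by norm_num) (by norm_num) (by norm_num)
  simp only [hψdef, one_smul, zero_smul, add_zero, one_pow, one_mul, zero_pow, mul_zero,
    zero_mul, sub_zero, add_sub_cancel] at h01
  linarith [h01]

lemma my_step' {V : Type*} [NormedAddCommGroup V] [InnerProductSpace ℝ V] [CompleteSpace V]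
    (L : ℝ) (hL : 0 < L) (f : V → ℝ) (f' : V → V)
    (hdiff : ∀ z, HasGradientAt f (f' z) z)
    (hlip : ∀ z w : V, ‖f' z - f' w‖ ≤ L * ‖z - w‖) (b : V) :
    f (b - (1 / L) • f' b) ≤ f b - 1 / (2 * L) * ‖f' b‖ ^ 2 := by
  have hd := my_descent L hL f f' hdiff hlip b (b - (1 / L) • f' b)
  have e0 : b - (1 / L) • f' b - b = -((1 / L) • f' b) := by abel
  rw [e0] at hd
  rw [inner_neg_right, real_inner_smul_right, real_inner_self_eq_norm_sq, norm_neg,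
    norm_smul] at hd
  have hL' : (L : ℝ) ≠ 0 := ne_of_gt hL
  have e1 : ‖(1 : ℝ) / L‖ = 1 / L := by
    rw [Real.norm_eq_abs, abs_of_pos (by positivity)]
  rw [e1] at hd
  have e2 : L / 2 * (1 / L * ‖f' b‖) ^ 2 = 1 / (2 * L) * ‖f' b‖ ^ 2 := by
    field_simp
  have e3 : (1:ℝ) / L * ‖f' b‖ ^ 2 = 2 * (1 / (2 * L) * ‖f' b‖ ^ 2) := by
    field_simp
  linarith [hd, e2, e3]

lemma my_coco' {V : Type*} [NormedAddCommGroup V] [InnerProductSpace ℝ V] [CompleteSpace V]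
    (L : ℝ) (hL : 0 < L) (f : V → ℝ) (f' : V → V)
    (hdiff : ∀ z, HasGradientAt f (f' z) z)
    (hcvx : ∀ z w : V, 0 ≤ f z - f w - ⟪f' w, z - w⟫)
    (hlip : ∀ z w : V, ‖f' z - f' w‖ ≤ L * ‖z - w‖) (a b : V) :
    f a ≤ f b - ⟪f' a, b - a⟫ - 1 / (2 * L) * ‖f' b - f' a‖ ^ 2 := by
  set D := f' b - f' a with hD
  set w := b - (1 / L) • D with hw
  have hcv : f a + ⟪f' a, w - a⟫ ≤ f w := by have := hcvx w a; linarith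
  have hd := my_descent L hL f f' hdiff hlip b w
  have e0 : w - b = -((1 / L) • D) := by rw [hw]; abel
  have e1 : ⟪f' b, w - b⟫ = -(1 / L * ⟪f' b, D⟫) := by
    rw [e0, inner_neg_right, real_inner_smul_right]
  have e2 : ‖w - b‖ ^ 2 = (1 / L) ^ 2 * ‖D‖ ^ 2 := by
    rw [e0, norm_neg, norm_smul, Real.norm_eq_abs, abs_of_pos (by positivity), mul_pow]
  have e3 : ⟪f' a, w - a⟫ = ⟪f' a, b - a⟫ - 1 / L * ⟪f' a, D⟫ := by
    have : w - a = (b - a) - (1 / L) • D := by rw [hw]; abel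
    rw [this, inner_sub_right, real_inner_smul_right]
  have e4 : ⟪f' b, D⟫ - ⟪f' a, D⟫ = ‖D‖ ^ 2 := by
    rw [← inner_sub_left, ← hD, real_inner_self_eq_norm_sq]
  have ecomb : -(1 / L * ⟪f' b, D⟫) + L / 2 * ((1 / L) ^ 2 * ‖D‖ ^ 2) + 1 / L * ⟪f' a, D⟫
      = -(1 / (2 * L)) * ‖D‖ ^ 2 := by
    have hL' : (L : ℝ) ≠ 0 := ne_of_gt hL
    rw [← e4]
    field_simp
    ring
  rw [e1, e2] at hd
  rw [e3] at hcv
  linarith [hcv, hd, ecomb]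

lemma ipA {V : Type*} [NormedAddCommGroup V] [InnerProductSpace ℝ V] (p q s : V) :
    ‖p - s‖ ^ 2 - ‖q - s‖ ^ 2 = 2 * ⟪p - q, p - s⟫ - ‖p - q‖ ^ 2 := by
  simp only [← real_inner_self_eq_norm_sq, inner_sub_left, inner_sub_right]
  simp only [real_inner_comm s p, real_inner_comm s q, real_inner_comm q p]
  ring

lemma ipB {V : Type*} [NormedAddCommGroup V] [InnerProductSpace ℝ V] (Y p s : V) :
    2 * ⟪Y - p, p - s⟫ = ‖Y - s‖ ^ 2 - ‖Y - p‖ ^ 2 - ‖p - s‖ ^ 2 := by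
  simp only [← real_inner_self_eq_norm_sq, inner_sub_left, inner_sub_right]
  simp only [real_inner_comm p Y, real_inner_comm s Y, real_inner_comm s p]
  ring

lemma ipD {V : Type*} [NormedAddCommGroup V] [InnerProductSpace ℝ V] (q G : V) :
    ‖q - G‖ ^ 2 = ‖q‖ ^ 2 - 2 * ⟪G, q⟫ + ‖G‖ ^ 2 := by
  simp only [← real_inner_self_eq_norm_sq, inner_sub_left, inner_sub_right]
  simp only [real_inner_comm q G]
  ring

lemma ipE {V : Type*} [NormedAddCommGroup V] [InnerProductSpace ℝ V] (c d : ℝ) (u w : V) :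
    ‖c • u + d • w‖ ^ 2
      = c ^ 2 * ‖u‖ ^ 2 + 2 * (c * d) * ⟪w, u⟫ + d ^ 2 * ‖w‖ ^ 2 := by
  simp only [← real_inner_self_eq_norm_sq, inner_add_left, inner_add_right,
    real_inner_smul_left, real_inner_smul_right]
  simp only [real_inner_comm u w]
  ring

/-- One-step contraction `E_{k+1} ≤ E_k/(1+α_k)` for the explicit HNAG scheme
with one extra gradient step (Algorithm 3), where `Lα_k² = γ_k(2+α_k)`,
`β_k = 1/(Lα_k)`, `E_k = L_k + R_k`,
`L_k = f(x_k) - f(x*) + (γ_k/2)‖v_k - x*‖²` and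
`R_k = (λ_k/2)∑_{i<k} (α_iβ_i/λ_i)‖∇f(x_i)‖²`. -/
theorem extra_gradient_hnag_energy_contraction
    {V : Type*} [NormedAddCommGroup V] [InnerProductSpace ℝ V] [CompleteSpace V]
    (μ L : ℝ) (hμ : 0 ≤ μ) (hL : 0 < L) (f : V → ℝ) (f' : V → V)
    (hdiff : ∀ z, HasGradientAt f (f' z) z)
    (hconv : ∀ z w : V, f z - f w - ⟪f' w, z - w⟫ ≥ μ / 2 * ‖z - w‖ ^ 2)
    (hlip : ∀ z w : V, ‖f' z - f' w‖ ≤ L * ‖z - w‖)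
    (xstar : V) (hmin : ∀ z, f xstar ≤ f z)
    (x v y : ℕ → V) (γ α β lam : ℕ → ℝ) (hγ0 : 0 < γ 0)
    (hαpos : ∀ k, 0 < α k) (hαdef : ∀ k, L * (α k) ^ 2 = γ k * (2 + α k))
    (hβ : ∀ k, β k = 1 / (L * α k))
    (h1 : ∀ k, (α k)⁻¹ • (y k - x k) = v k - y k - β k • f' (x k))
    (h2 : ∀ k, (α k)⁻¹ • (v (k + 1) - v k)
        = (μ / γ k) • (y k - v (k + 1)) - (1 / γ k) • f' (y k))
    (h3 : ∀ k, (γ (k + 1) - γ k) / α k = μ - γ (k + 1))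
    (h4 : ∀ k, x (k + 1) = y k - (1 / L) • f' (y k))
    (hlam : ∀ k, lam k = ∏ i ∈ Finset.range k, (1 + α i)⁻¹)
    (k : ℕ) :
    ((f (x (k + 1)) - f xstar + γ (k + 1) / 2 * ‖v (k + 1) - xstar‖ ^ 2)
        + lam (k + 1) / 2 * ∑ i ∈ Finset.range (k + 1),
            (α i * β i / lam i) * ‖f' (x i)‖ ^ 2)
      ≤ ((f (x k) - f xstar + γ k / 2 * ‖v k - xstar‖ ^ 2)
          + lam k / 2 * ∑ i ∈ Finset.range k,
              (α i * β i / lam i) * ‖f' (x i)‖ ^ 2) / (1 + α k) := by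
  have ha := hαpos k
  have ha1 : (0:ℝ) < 1 + α k := by linarith
  have hane : α k ≠ 0 := ne_of_gt ha
  have hLne : L ≠ 0 := ne_of_gt hL
  -- positivity of γ
  have hγpos : ∀ n, 0 < γ n := by
    intro n
    induction n with
    | zero => exact hγ0
    | succ m ih =>
      have ham := hαpos m
      have h3m := h3 m
      have hrel : γ (m + 1) - γ m = α m * (μ - γ (m + 1)) := by
        field_simp at h3m; linarith [h3m]
      have h6 : γ (m + 1) = (γ m + α m * μ) / (1 + α m) := by
        have : (0:ℝ) < 1 + α m := by linarith
        field_simp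
        linarith [hrel]
      rw [h6]
      have h7 : 0 < γ m + α m * μ := by nlinarith [mul_nonneg ham.le hμ]
      positivity
  have hgm := hγpos k
  have hgmne : γ k ≠ 0 := ne_of_gt hgm
  have hγrel : γ (k + 1) * (1 + α k) = γ k + α k * μ := by
    have h3k := h3 k
    field_simp at h3k
    linarith [h3k]
  have hsum : γ k + α k * μ ≠ 0 := by nlinarith [mul_nonneg ha.le hμ]
  -- vector identities
  have hYX : y k - x k = α k • (v k - y k) - (α k * β k) • f' (x k) := by
    have h := h1 k
    have h' := congrArg (fun z => α k • z) h
    simp only [smul_smul, mul_inv_cancel₀ hane, one_smul] at h'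
    rw [h', smul_sub, smul_smul]
  have hVs : γ k • (v (k + 1) - v k)
      = (α k * μ) • (y k - v (k + 1)) - α k • f' (y k) := by
    have h' : v (k + 1) - v k
        = α k • ((μ / γ k) • (y k - v (k + 1)) - (1 / γ k) • f' (y k)) := by
      calc v (k + 1) - v k = α k • ((α k)⁻¹ • (v (k + 1) - v k)) := by
            rw [smul_smul, mul_inv_cancel₀ hane, one_smul]
        _ = _ := by rw [h2 k]
    rw [h', smul_smul, smul_sub, smul_smul, smul_smul]
    congr 2
    · field_simp
    · field_simp
  -- scalar inequalities
  have hA : f (x (k + 1)) ≤ f (y k) - 1 / (2 * L) * ‖f' (y k)‖ ^ 2 := by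
    rw [h4 k]; exact my_step' L hL f f' hdiff hlip (y k)
  have hcvx : ∀ z w : V, 0 ≤ f z - f w - ⟪f' w, z - w⟫ := by
    intro z w
    have := hconv z w
    nlinarith [sq_nonneg ‖z - w‖, hμ]
  have hB : f (y k) ≤ f (x k) - ⟪f' (y k), x k - y k⟫
      - 1 / (2 * L) * ‖f' (x k) - f' (y k)‖ ^ 2 :=
    my_coco' L hL f f' hdiff hcvx hlip (y k) (x k)
  have hBsign : ⟪f' (y k), x k - y k⟫ = -⟪f' (y k), y k - x k⟫ := by
    rw [← inner_neg_right, neg_sub]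
  have hB' : f (y k) ≤ f (x k) + ⟪f' (y k), y k - x k⟫
      - 1 / (2 * L) * ‖f' (x k) - f' (y k)‖ ^ 2 := by
    rw [hBsign] at hB; linarith
  have hC : f (y k) - f xstar ≤ ⟪f' (y k), y k - xstar⟫ - μ / 2 * ‖y k - xstar‖ ^ 2 := by
    have h := hconv xstar (y k)
    have e : ⟪f' (y k), xstar - y k⟫ = -⟪f' (y k), y k - xstar⟫ := by
      rw [← inner_neg_right, neg_sub]
    rw [e] at h
    have en : ‖xstar - y k‖ = ‖y k - xstar‖ := norm_sub_rev _ _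
    rw [en] at h
    linarith
  have hC1 : α k * (f (y k) - f xstar)
      ≤ α k * (⟪f' (y k), y k - xstar⟫ - μ / 2 * ‖y k - xstar‖ ^ 2) :=
    mul_le_mul_of_nonneg_left hC ha.le
  have hA1 : (1 + α k) * (f (x (k + 1)) - f xstar)
      ≤ (1 + α k) * ((f (y k) - f xstar) - 1 / (2 * L) * ‖f' (y k)‖ ^ 2) :=
    mul_le_mul_of_nonneg_left (by linarith) ha1.le
  have hγid : (1 + α k) * (γ (k + 1) / 2 * ‖v (k + 1) - xstar‖ ^ 2)
      = γ k / 2 * ‖v (k + 1) - xstar‖ ^ 2 + (α k * μ) / 2 * ‖v (k + 1) - xstar‖ ^ 2 := by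
    linear_combination (‖v (k + 1) - xstar‖ ^ 2 / 2) * hγrel
  -- polarization-type identities
  have eqP1 : ‖v (k + 1) - xstar‖ ^ 2 - ‖v k - xstar‖ ^ 2
      = 2 * ⟪v (k + 1) - v k, v (k + 1) - xstar⟫ - ‖v (k + 1) - v k‖ ^ 2 :=
    ipA (v (k + 1)) (v k) xstar
  have eqP2 : 2 * ⟪y k - v (k + 1), v (k + 1) - xstar⟫
      = ‖y k - xstar‖ ^ 2 - ‖y k - v (k + 1)‖ ^ 2 - ‖v (k + 1) - xstar‖ ^ 2 :=
    ipB (y k) (v (k + 1)) xstar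
  have eqP3 : ⟪f' (y k), y k - xstar⟫ - ⟪f' (y k), v (k + 1) - xstar⟫
      + ⟪f' (y k), v k - y k⟫ = -⟪f' (y k), v (k + 1) - v k⟫ := by
    simp only [inner_sub_right]
    ring
  have eqP4 : ‖f' (x k) - f' (y k)‖ ^ 2
      = ‖f' (x k)‖ ^ 2 - 2 * ⟪f' (y k), f' (x k)⟫ + ‖f' (y k)‖ ^ 2 :=
    ipD (f' (x k)) (f' (y k))
  have eqE1 : γ k * ⟪v (k + 1) - v k, v (k + 1) - xstar⟫
      = α k * μ * ⟪y k - v (k + 1), v (k + 1) - xstar⟫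
        - α k * ⟪f' (y k), v (k + 1) - xstar⟫ := by
    conv_lhs => rw [← real_inner_smul_left, hVs]
    rw [inner_sub_left, real_inner_smul_left, real_inner_smul_left]
  have eqE2 : ⟪f' (y k), y k - x k⟫
      = α k * ⟪f' (y k), v k - y k⟫ - α k * β k * ⟪f' (y k), f' (x k)⟫ := by
    rw [hYX, inner_sub_right, real_inner_smul_right, real_inner_smul_right]
  have hab2 : α k * β k * L = 1 := by rw [hβ]; field_simp
  have hYv : γ k • (v (k + 1) - v k) + α k • f' (y k) = (α k * μ) • (y k - v (k + 1)) := by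
    linear_combination (norm := module) hVs
  have e3a : ‖γ k • (v (k + 1) - v k) + α k • f' (y k)‖ ^ 2
      = (α k * μ) ^ 2 * ‖y k - v (k + 1)‖ ^ 2 := by
    rw [hYv, norm_smul, mul_pow, Real.norm_eq_abs, sq_abs]
  have e3b : ‖γ k • (v (k + 1) - v k) + α k • f' (y k)‖ ^ 2
      = γ k ^ 2 * ‖v (k + 1) - v k‖ ^ 2
        + 2 * (γ k * α k) * ⟪f' (y k), v (k + 1) - v k⟫
        + α k ^ 2 * ‖f' (y k)‖ ^ 2 :=
    ipE (γ k) (α k) (v (k + 1) - v k) (f' (y k))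
  have e3 : γ k ^ 2 * ‖v (k + 1) - v k‖ ^ 2
      + 2 * (γ k * α k) * ⟪f' (y k), v (k + 1) - v k⟫
      + α k ^ 2 * ‖f' (y k)‖ ^ 2
      = (α k * μ) ^ 2 * ‖y k - v (k + 1)‖ ^ 2 := e3b.symm.trans e3a
  -- the key algebraic identity (cleared of denominators)
  have FIN2 : (2 * γ k * L) *
      (⟪f' (y k), y k - x k⟫ + α k * ⟪f' (y k), y k - xstar⟫
        - 1 / (2 * L) * ‖f' (x k) - f' (y k)‖ ^ 2
        - α k * (μ / 2 * ‖y k - xstar‖ ^ 2)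
        - (1 + α k) * (1 / (2 * L) * ‖f' (y k)‖ ^ 2)
        + γ k / 2 * ‖v (k + 1) - xstar‖ ^ 2 + α k * μ / 2 * ‖v (k + 1) - xstar‖ ^ 2
        - γ k / 2 * ‖v k - xstar‖ ^ 2 + α k * β k / 2 * ‖f' (x k)‖ ^ 2)
      = -(α k * μ * (γ k + α k * μ) * L) * ‖y k - v (k + 1)‖ ^ 2
        + (L * α k ^ 2 - γ k * (2 + α k)) * ‖f' (y k)‖ ^ 2 := by
    have hL2 : 2 * L * (1 / (2 * L)) = 1 := by field_simp
    linear_combination (γ k ^ 2 * L) * eqP1 + (2 * γ k * L) * eqE1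
      + (α k * μ * γ k * L) * eqP2 + (2 * γ k * L) * eqE2
      + (2 * γ k * L * α k) * eqP3 + (-L) * e3 + (-(γ k)) * eqP4
      + (γ k * ‖f' (x k)‖ ^ 2 - 2 * γ k * ⟪f' (y k), f' (x k)⟫) * hab2
      + (-(γ k) * ‖f' (x k) - f' (y k)‖ ^ 2 - γ k * (1 + α k) * ‖f' (y k)‖ ^ 2) * hL2
  have hzero : L * α k ^ 2 - γ k * (2 + α k) = 0 := by linarith [hαdef k]
  have hTle : ⟪f' (y k), y k - x k⟫ + α k * ⟪f' (y k), y k - xstar⟫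
        - 1 / (2 * L) * ‖f' (x k) - f' (y k)‖ ^ 2
        - α k * (μ / 2 * ‖y k - xstar‖ ^ 2)
        - (1 + α k) * (1 / (2 * L) * ‖f' (y k)‖ ^ 2)
        + γ k / 2 * ‖v (k + 1) - xstar‖ ^ 2 + α k * μ / 2 * ‖v (k + 1) - xstar‖ ^ 2
        - γ k / 2 * ‖v k - xstar‖ ^ 2 + α k * β k / 2 * ‖f' (x k)‖ ^ 2 ≤ 0 := by
    have hc : (0:ℝ) < 2 * γ k * L := by positivity
    have hfac : 0 ≤ α k * μ * (γ k + α k * μ) * L := by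
      have h1 : 0 ≤ α k * μ := mul_nonneg ha.le hμ
      have h2 : 0 ≤ γ k + α k * μ := by linarith
      have := mul_nonneg (mul_nonneg h1 h2) hL.le
      linarith
    have hterm : -(α k * μ * (γ k + α k * μ) * L) * ‖y k - v (k + 1)‖ ^ 2 ≤ 0 := by
      have h3 : (0:ℝ) ≤ ‖y k - v (k + 1)‖ ^ 2 := by positivity
      have := mul_nonneg hfac (by positivity : (0:ℝ) ≤ ‖y k - v (k + 1)‖ ^ 2)
      linarith only [this]
    have hterm2 : (L * α k ^ 2 - γ k * (2 + α k)) * ‖f' (y k)‖ ^ 2 = 0 := by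
      rw [hzero]; ring
    have hneg : (2 * γ k * L) *
        (⟪f' (y k), y k - x k⟫ + α k * ⟪f' (y k), y k - xstar⟫
          - 1 / (2 * L) * ‖f' (x k) - f' (y k)‖ ^ 2
          - α k * (μ / 2 * ‖y k - xstar‖ ^ 2)
          - (1 + α k) * (1 / (2 * L) * ‖f' (y k)‖ ^ 2)
          + γ k / 2 * ‖v (k + 1) - xstar‖ ^ 2 + α k * μ / 2 * ‖v (k + 1) - xstar‖ ^ 2
          - γ k / 2 * ‖v k - xstar‖ ^ 2 + α k * β k / 2 * ‖f' (x k)‖ ^ 2)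
        ≤ (2 * γ k * L) * 0 := by
      rw [FIN2]
      rw [mul_zero]
      linarith only [hterm, hterm2]
    exact le_of_mul_le_mul_left hneg hc
  -- assemble
  rw [le_div_iff₀ ha1]
  rw [Finset.sum_range_succ]
  have hlampos : ∀ n, 0 < lam n := by
    intro n
    rw [hlam]
    apply Finset.prod_pos
    intro i _
    have := hαpos i
    positivity
  have hlamne : lam k ≠ 0 := ne_of_gt (hlampos k)
  have hlamrec : lam (k + 1) = lam k * (1 + α k)⁻¹ := by
    rw [hlam, hlam, Finset.prod_range_succ]
  have heq1 : (lam (k + 1) / 2 *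
        (∑ i ∈ Finset.range k, (α i * β i / lam i) * ‖f' (x i)‖ ^ 2
          + (α k * β k / lam k) * ‖f' (x k)‖ ^ 2)) * (1 + α k)
      = lam k / 2 * (∑ i ∈ Finset.range k, (α i * β i / lam i) * ‖f' (x i)‖ ^ 2)
        + α k * β k / 2 * ‖f' (x k)‖ ^ 2 := by
    rw [hlamrec]
    field_simp
  linarith only [hA1, hB', hC1, hγid, hTle, heq1]
end

section
/- Let μ ≥ 0, L > 0, and let f : V → ℝ be differentiable, μ-convex, with L-Lipschitz gradient and global minimizer x*. Let α > 0 satisfy Lα² = γ(2 + α) with γ > 0, let β = 1/(Lα), and suppose y, v⁺, x⁺ and γ⁺ are obtained from x, v, γ by one step of the extra-gradient scheme: (y - x)/α = v - y - β∇f(x), (v⁺ - v)/α = (μ/γ)(y - v⁺) - (1/γ)∇f(y), (γ⁺ - γ)/α = μ - γ⁺, x⁺ = y - (1/L)∇f(y). Then L(x⁺, v⁺, γ⁺) - L(x, v, γ) ≤ -α·L(x⁺, v⁺, γ⁺) - (1/(2L))‖∇f(x)‖². -/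
open scoped RealInnerProductSpace

lemma descent_step {V : Type*} [NormedAddCommGroup V] [InnerProductSpace ℝ V] [CompleteSpace V]
    (L : ℝ) (f : V → ℝ) (f' : V → V)
    (hdiff : ∀ z, HasGradientAt f (f' z) z)
    (hlip : ∀ z w : V, ‖f' z - f' w‖ ≤ L * ‖z - w‖) (z w : V) :
    f z ≤ f w + ⟪f' w, z - w⟫ + L / 2 * ‖z - w‖ ^ 2 := by
  set u := z - w with hu
  set g : ℝ → ℝ := fun t => f (w + t • u) - t * ⟪f' w, u⟫ - L / 2 * t ^ 2 * ‖u‖ ^ 2 with hg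
  have hderiv : ∀ t : ℝ, HasDerivAt g
      (⟪f' (w + t • u), u⟫ - ⟪f' w, u⟫ - L * t * ‖u‖ ^ 2) t := by
    intro t
    have hc : HasDerivAt (fun t : ℝ => w + t • u) u t := by
      simpa using ((hasDerivAt_id t).smul_const u).const_add w
    have hf : HasDerivAt (fun t : ℝ => f (w + t • u)) ⟪f' (w + t • u), u⟫ t := by
      have := ((hdiff (w + t • u)).hasFDerivAt.comp_hasDerivAt t hc)
      simp at this
      exact this
    have h2 : HasDerivAt (fun t : ℝ => t * ⟪f' w, u⟫) ⟪f' w, u⟫ t := by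
      simpa using (hasDerivAt_id t).mul_const ⟪f' w, u⟫
    have h3 : HasDerivAt (fun t : ℝ => L / 2 * t ^ 2 * ‖u‖ ^ 2) (L * t * ‖u‖ ^ 2) t := by
      have : HasDerivAt (fun t : ℝ => t ^ 2) (2 * t) t := by
        simpa using hasDerivAt_pow 2 t
      have := (this.const_mul (L / 2)).mul_const (‖u‖ ^ 2)
      rw [show L * t * ‖u‖ ^ 2 = L / 2 * (2 * t) * ‖u‖ ^ 2 by ring]
      exact this
    exact (hf.sub h2).sub h3
  have hdiffg : ∀ t : ℝ, DifferentiableAt ℝ g t := fun t => (hderiv t).differentiableAt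
  have hanti : AntitoneOn g (Set.Icc (0:ℝ) 1) := by
    apply antitoneOn_of_deriv_nonpos (convex_Icc 0 1)
    · exact fun t _ => (hdiffg t).continuousAt.continuousWithinAt
    · intro t ht
      exact (hdiffg t).differentiableWithinAt
    · intro t ht
      rw [interior_Icc] at ht
      rw [(hderiv t).deriv]
      have h1 : ⟪f' (w + t • u), u⟫ - ⟪f' w, u⟫ = ⟪f' (w + t • u) - f' w, u⟫ := by
        rw [inner_sub_left]
      rw [h1]
      have h2 : ⟪f' (w + t • u) - f' w, u⟫ ≤ ‖f' (w + t • u) - f' w‖ * ‖u‖ :=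
        real_inner_le_norm _ _
      have h3 : ‖f' (w + t • u) - f' w‖ ≤ L * (t * ‖u‖) := by
        have := hlip (w + t • u) w
        simpa [norm_smul, abs_of_pos ht.1, mul_assoc] using this
      nlinarith [norm_nonneg u, ht.1.le, mul_le_mul_of_nonneg_right h3 (norm_nonneg u)]
  have h01 : g 1 ≤ g 0 := hanti (Set.mem_Icc.mpr ⟨le_refl 0, zero_le_one⟩)
    (Set.mem_Icc.mpr ⟨zero_le_one, le_refl 1⟩) zero_le_one
  have e1 : g 1 = f z - ⟪f' w, u⟫ - L / 2 * ‖u‖ ^ 2 := by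
    simp [hg, hu]
  have e0 : g 0 = f w := by simp [hg]
  rw [e1, e0] at h01
  linarith

lemma expand_sq {V : Type*} [NormedAddCommGroup V] [InnerProductSpace ℝ V]
    (a b c : ℝ) (p q r : V) :
    ‖a • p + b • q - c • r‖ ^ 2
      = a ^ 2 * ‖p‖ ^ 2 + b ^ 2 * ‖q‖ ^ 2 + c ^ 2 * ‖r‖ ^ 2
        + 2 * (a * b) * ⟪p, q⟫ - 2 * (a * c) * ⟪p, r⟫ - 2 * (b * c) * ⟪q, r⟫ := by
  rw [← real_inner_self_eq_norm_sq]
  simp only [inner_sub_left, inner_sub_right, inner_add_left, inner_add_right,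
    real_inner_smul_left, real_inner_smul_right]
  rw [real_inner_comm q p, real_inner_comm r p, real_inner_comm r q,
    real_inner_self_eq_norm_sq, real_inner_self_eq_norm_sq, real_inner_self_eq_norm_sq]
  ring

/-- One step of the explicit HNAG scheme with an extra gradient step, with
`Lα² = γ(2+α)` and `β = 1/(Lα)`, contracts the Lyapunov function:
`L(x⁺,v⁺,γ⁺) - L(x,v,γ) ≤ -α L(x⁺,v⁺,γ⁺) - (1/(2L))‖∇f(x)‖²`. -/
theorem extra_gradient_one_step_decay
    {V : Type*} [NormedAddCommGroup V] [InnerProductSpace ℝ V] [CompleteSpace V]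
    (μ L : ℝ) (hμ : 0 ≤ μ) (hL : 0 < L) (f : V → ℝ) (f' : V → V)
    (hdiff : ∀ z, HasGradientAt f (f' z) z)
    (hconv : ∀ z w : V, f z - f w - ⟪f' w, z - w⟫ ≥ μ / 2 * ‖z - w‖ ^ 2)
    (hlip : ∀ z w : V, ‖f' z - f' w‖ ≤ L * ‖z - w‖)
    (xstar : V) (hmin : ∀ z, f xstar ≤ f z)
    (α β γ γp : ℝ) (hα : 0 < α) (hγ : 0 < γ)
    (hαγ : L * α ^ 2 = γ * (2 + α)) (hβ : β = 1 / (L * α))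
    (x v y xp vp : V)
    (h1 : α⁻¹ • (y - x) = v - y - β • f' x)
    (h2 : α⁻¹ • (vp - v) = (μ / γ) • (y - vp) - (1 / γ) • f' y)
    (h3 : (γp - γ) / α = μ - γp)
    (h4 : xp = y - (1 / L) • f' y) :
    (f xp - f xstar + γp / 2 * ‖vp - xstar‖ ^ 2)
        - (f x - f xstar + γ / 2 * ‖v - xstar‖ ^ 2)
      ≤ -(α * (f xp - f xstar + γp / 2 * ‖vp - xstar‖ ^ 2))
        - 1 / (2 * L) * ‖f' x‖ ^ 2 := by
  have hLne : L ≠ 0 := hL.ne'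
  have hαne : α ≠ 0 := hα.ne'
  have hγne : γ ≠ 0 := hγ.ne'
  have h2L : (0:ℝ) < 2 * L := by linarith
  -- step equations in convenient form
  have h1' : y - x = α • (v - y) - (1 / L) • f' x := by
    have hab : α * β = 1 / L := by rw [hβ]; field_simp
    have e := congrArg (fun z : V => α • z) h1
    simp only [smul_sub, smul_smul, mul_inv_cancel₀ hαne] at e
    rw [← hab]
    linear_combination (norm := module) e
  have hvp' : (γ + α * μ) • (vp - xstar)
      = γ • (v - xstar) + (α * μ) • (y - xstar) - α • f' y := by
    have e := congrArg (fun z : V => γ • (α • z)) h2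
    simp only [smul_sub, smul_smul] at e
    rw [show γ * (α * α⁻¹) = γ by field_simp] at e
    rw [show γ * (α * (μ / γ)) = α * μ by field_simp] at e
    rw [show γ * (α * (1 / γ)) = α by field_simp] at e
    linear_combination (norm := module) e
  have hγpμ : (1 + α) * γp = γ + α * μ := by
    field_simp at h3
    linarith
  have hs : 0 < γ + α * μ := by nlinarith [mul_nonneg hα.le hμ]
  -- (A) gradient descent step: 2L f(xp) ≤ 2L f(y) - ‖∇f(y)‖²
  have hA2 : 2 * L * f xp ≤ 2 * L * f y - ‖f' y‖ ^ 2 := by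
    have hA0 := descent_step L f f' hdiff hlip xp y
    have hxy : xp - y = -((1 / L) • f' y) := by rw [h4]; abel
    rw [hxy] at hA0
    have key : f y + ⟪f' y, -((1 / L) • f' y)⟫ + L / 2 * ‖-((1 / L) • f' y)‖ ^ 2
        = f y - 1 / (2 * L) * ‖f' y‖ ^ 2 := by
      rw [inner_neg_right, real_inner_smul_right, real_inner_self_eq_norm_sq,
        norm_neg, norm_smul, Real.norm_eq_abs, abs_of_pos (by positivity : (0:ℝ) < 1 / L)]
      field_simp
      ring
    rw [key] at hA0
    have e2 : 2 * L * (f y - 1 / (2 * L) * ‖f' y‖ ^ 2) = 2 * L * f y - ‖f' y‖ ^ 2 := by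
      field_simp
    have := mul_le_mul_of_nonneg_left hA0 h2L.le
    linarith [e2 ▸ this]
  -- (B) strong convexity at y vs xstar
  have hB : f y - f xstar ≤ ⟪f' y, y - xstar⟫ - μ / 2 * ‖y - xstar‖ ^ 2 := by
    have hb0 := hconv xstar y
    have e1 : xstar - y = -(y - xstar) := by abel
    rw [e1, inner_neg_right, norm_neg] at hb0
    linarith
  -- (C) interpolation: 2L (f y - f x) ≤ 2Lα(⟪gy,u⟫-⟪gy,d⟫) - 2⟪gy,gx⟫ - ‖gx-gy‖²
  have hC2 : 2 * L * (f y - f x)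
      ≤ 2 * L * α * (⟪f' y, v - xstar⟫ - ⟪f' y, y - xstar⟫) - 2 * ⟪f' y, f' x⟫
        - (‖f' x‖ ^ 2 - 2 * ⟪f' x, f' y⟫ + ‖f' y‖ ^ 2) := by
    have hc1 := descent_step L f f' hdiff hlip (x - (1 / L) • (f' x - f' y)) x
    have hzx : x - (1 / L) • (f' x - f' y) - x = -((1 / L) • (f' x - f' y)) := by abel
    rw [hzx] at hc1
    have hc2 := hconv (x - (1 / L) • (f' x - f' y)) y
    have hzy : x - (1 / L) • (f' x - f' y) - y = x - y - (1 / L) • (f' x - f' y) := by abel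
    rw [hzy] at hc2
    have i1 : ⟪f' x, -((1 / L) • (f' x - f' y))⟫
        = -(1 / L) * (‖f' x‖ ^ 2 - ⟪f' x, f' y⟫) := by
      rw [inner_neg_right, real_inner_smul_right, inner_sub_right, real_inner_self_eq_norm_sq]
      ring
    have h1'' : x - y = (1 / L) • f' x - α • ((v - xstar) - (y - xstar)) := by
      linear_combination (norm := module) -h1'
    have i2 : ⟪f' y, x - y - (1 / L) • (f' x - f' y)⟫
        = (1 / L) * ⟪f' y, f' x⟫ - α * (⟪f' y, v - xstar⟫ - ⟪f' y, y - xstar⟫)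
          - (1 / L) * (⟪f' y, f' x⟫ - ‖f' y‖ ^ 2) := by
      rw [h1'']
      simp only [inner_sub_right, real_inner_smul_right, real_inner_self_eq_norm_sq]
    have i3 : ‖-((1 / L) • (f' x - f' y))‖ ^ 2 = (1 / L) ^ 2 * ‖f' x - f' y‖ ^ 2 := by
      rw [norm_neg, norm_smul, Real.norm_eq_abs, mul_pow, sq_abs]
    have i4 : (0:ℝ) ≤ μ / 2 * ‖x - (1 / L) • (f' x - f' y) - y‖ ^ 2 := by positivity
    rw [hzy] at i4
    have hC0 : f y - f x ≤ α * (⟪f' y, v - xstar⟫ - ⟪f' y, y - xstar⟫)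
        + (-(1 / L) * (‖f' x‖ ^ 2 - ⟪f' x, f' y⟫))
        + L / 2 * ((1 / L) ^ 2 * ‖f' x - f' y‖ ^ 2)
        - (1 / L) * ⟪f' y, f' x⟫ + (1 / L) * (⟪f' y, f' x⟫ - ‖f' y‖ ^ 2) := by
      rw [i1, i3] at hc1
      rw [i2] at hc2
      linarith
    have hDD : ‖f' x - f' y‖ ^ 2 = ‖f' x‖ ^ 2 - 2 * ⟪f' x, f' y⟫ + ‖f' y‖ ^ 2 :=
      norm_sub_sq_real _ _
    have m := mul_le_mul_of_nonneg_left hC0 h2L.le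
    have e3 : 2 * L * (α * (⟪f' y, v - xstar⟫ - ⟪f' y, y - xstar⟫)
        + (-(1 / L) * (‖f' x‖ ^ 2 - ⟪f' x, f' y⟫))
        + L / 2 * ((1 / L) ^ 2 * ‖f' x - f' y‖ ^ 2)
        - (1 / L) * ⟪f' y, f' x⟫ + (1 / L) * (⟪f' y, f' x⟫ - ‖f' y‖ ^ 2))
        = 2 * L * α * (⟪f' y, v - xstar⟫ - ⟪f' y, y - xstar⟫)
          - 2 * (‖f' x‖ ^ 2 - ⟪f' x, f' y⟫) + ‖f' x - f' y‖ ^ 2 - 2 * ‖f' y‖ ^ 2 := by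
      field_simp
      ring
    rw [e3, hDD] at m
    have hcomm : ⟪f' y, f' x⟫ = ⟪f' x, f' y⟫ := real_inner_comm _ _
    linarith [m, hcomm]
  -- quadratic expansion of ‖vp - xstar‖²
  have hW : (γ + α * μ) ^ 2 * ‖vp - xstar‖ ^ 2
      = γ ^ 2 * ‖v - xstar‖ ^ 2 + (α * μ) ^ 2 * ‖y - xstar‖ ^ 2 + α ^ 2 * ‖f' y‖ ^ 2
        + 2 * (γ * (α * μ)) * ⟪v - xstar, y - xstar⟫
        - 2 * (γ * α) * ⟪f' y, v - xstar⟫ - 2 * ((α * μ) * α) * ⟪f' y, y - xstar⟫ := by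
    have e := congrArg (fun z : V => ‖z‖ ^ 2) hvp'
    rw [norm_smul, Real.norm_eq_abs, mul_pow, sq_abs] at e
    rw [expand_sq γ (α * μ) α (v - xstar) (y - xstar) (f' y)] at e
    rw [real_inner_comm (f' y) (v - xstar), real_inner_comm (f' y) (y - xstar)] at e
    linarith [e]
  -- sum of squares ≥ 0
  have hSQ : (0:ℝ) ≤ α ^ 2 * ‖f' y‖ ^ 2 + γ ^ 2 * ‖y - xstar‖ ^ 2 + γ ^ 2 * ‖v - xstar‖ ^ 2
      + 2 * (α * γ) * ⟪f' y, y - xstar⟫ - 2 * (α * γ) * ⟪f' y, v - xstar⟫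
      - 2 * (γ * γ) * ⟪v - xstar, y - xstar⟫ := by
    have e := expand_sq α γ γ (f' y) (y - xstar) (v - xstar)
    rw [real_inner_comm (v - xstar) (y - xstar)] at e
    have := sq_nonneg ‖α • f' y + γ • (y - xstar) - γ • (v - xstar)‖
    linarith [e, this]
  -- key quadratic inequality
  have hKey : L * ((γ + α * μ) * ‖vp - xstar‖ ^ 2)
      ≤ (2 + α) * ‖f' y‖ ^ 2 + L * α * μ * ‖y - xstar‖ ^ 2
        - 2 * L * α * ⟪f' y, v - xstar⟫ + L * γ * ‖v - xstar‖ ^ 2 := by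
    have hpos : (0:ℝ) < (γ + α * μ) * γ := mul_pos hs hγ
    apply le_of_mul_le_mul_left _ hpos
    have hsq' : (0:ℝ) ≤ L * (α * μ) * (α ^ 2 * ‖f' y‖ ^ 2 + γ ^ 2 * ‖y - xstar‖ ^ 2
        + γ ^ 2 * ‖v - xstar‖ ^ 2 + 2 * (α * γ) * ⟪f' y, y - xstar⟫
        - 2 * (α * γ) * ⟪f' y, v - xstar⟫ - 2 * (γ * γ) * ⟪v - xstar, y - xstar⟫) :=
      mul_nonneg (mul_nonneg hL.le (mul_nonneg hα.le hμ)) hSQ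
    have hid : ((γ + α * μ) * γ) * ((2 + α) * ‖f' y‖ ^ 2 + L * α * μ * ‖y - xstar‖ ^ 2
          - 2 * L * α * ⟪f' y, v - xstar⟫ + L * γ * ‖v - xstar‖ ^ 2)
        - ((γ + α * μ) * γ) * (L * ((γ + α * μ) * ‖vp - xstar‖ ^ 2))
        = L * (α * μ) * (α ^ 2 * ‖f' y‖ ^ 2 + γ ^ 2 * ‖y - xstar‖ ^ 2
          + γ ^ 2 * ‖v - xstar‖ ^ 2 + 2 * (α * γ) * ⟪f' y, y - xstar⟫
          - 2 * (α * γ) * ⟪f' y, v - xstar⟫ - 2 * (γ * γ) * ⟪v - xstar, y - xstar⟫) := by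
      linear_combination (-(L * γ)) * hW + (-((γ + α * μ) * ‖f' y‖ ^ 2)) * hαγ
    linarith [hid, hsq']
  -- head inequality
  have m1 := mul_le_mul_of_nonneg_left hA2 (show (0:ℝ) ≤ 1 + α by linarith)
  have m2 := mul_le_mul_of_nonneg_left hB (show (0:ℝ) ≤ 2 * L * α by positivity)
  have hHead2 : 2 * L * ((1 + α) * (f xp - f xstar)) - 2 * L * (f x - f xstar)
      ≤ -(2 + α) * ‖f' y‖ ^ 2 - ‖f' x‖ ^ 2 - L * α * μ * ‖y - xstar‖ ^ 2
        + 2 * L * α * ⟪f' y, v - xstar⟫ := by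
    have hcomm : ⟪f' y, f' x⟫ = ⟪f' x, f' y⟫ := real_inner_comm _ _
    linarith [m1, m2, hC2, hcomm]
  -- conclude
  have hγp3 : L * ((1 + α) * γp * ‖vp - xstar‖ ^ 2)
      = L * ((γ + α * μ) * ‖vp - xstar‖ ^ 2) := by rw [hγpμ]
  have eid : 2 * L * ((f xp - f xstar + γp / 2 * ‖vp - xstar‖ ^ 2)
        - (f x - f xstar + γ / 2 * ‖v - xstar‖ ^ 2)
        - (-(α * (f xp - f xstar + γp / 2 * ‖vp - xstar‖ ^ 2))
          - 1 / (2 * L) * ‖f' x‖ ^ 2))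
      = 2 * L * ((1 + α) * (f xp - f xstar)) - 2 * L * (f x - f xstar)
        + L * ((1 + α) * γp * ‖vp - xstar‖ ^ 2) - L * γ * ‖v - xstar‖ ^ 2 + ‖f' x‖ ^ 2 := by
    field_simp
    ring
  have hfin : 2 * L * ((f xp - f xstar + γp / 2 * ‖vp - xstar‖ ^ 2)
        - (f x - f xstar + γ / 2 * ‖v - xstar‖ ^ 2)
        - (-(α * (f xp - f xstar + γp / 2 * ‖vp - xstar‖ ^ 2))
          - 1 / (2 * L) * ‖f' x‖ ^ 2)) ≤ 2 * L * 0 := by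
    rw [eid, mul_zero]
    linarith [hHead2, hKey, hγp3]
  have hfin2 := le_of_mul_le_mul_left hfin h2L
  linarith [hfin2]
end

section
/- Let μ ≥ 0, L > 0, let h : V → ℝ be convex, differentiable with L-Lipschitz gradient, let g : V → ℝ be convex, and set f = h + g; assume f is μ-convex in the subgradient sense and has global minimizer x*. Let γ₀ > 0, x₀, v₀ ∈ V, and suppose sequences (x_k, v_k, γ_k) and (p_{k+1}) satisfy: α_k = √(γ_k/L), β_k = 1/(Lα_k), p_{k+1} is a subgradient of g at x_{k+1}, (x_{k+1} - x_k)/α_k = v_k - x_{k+1} - β_k(∇h(x_k) + p_{k+1}), (v_{k+1} - v_k)/α_k = (μ/γ_k)(x_{k+1} - v_{k+1}) - (1/γ_k)(∇h(x_{k+1}) + p_{k+1}), (γ_{k+1} - γ_k)/α_k = μ - γ_{k+1}. Define L_k = f(x_k) - f(x*) + (γ_k/2)‖v_k - x*‖². Then for every k ≥ 0, L_{k+1} ≤ L_k/(1 + α_k). -/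
set_option maxHeartbeats 1000000

open scoped RealInnerProductSpace

open Set

section Aux

variable {V : Type*} [NormedAddCommGroup V] [InnerProductSpace ℝ V] [CompleteSpace V]

private lemma line_hasDerivAt (h : V → ℝ) (h' : V → V)
    (hdiff : ∀ z, HasGradientAt h (h' z) z) (y Δ : V) (t : ℝ) :
    HasDerivAt (fun s : ℝ => h (s • Δ + y)) ⟪h' (t • Δ + y), Δ⟫ t := by
  have hc : HasDerivAt (fun s : ℝ => s • Δ + y) Δ t := by
    simpa using (HasDerivAt.smul_const (hasDerivAt_id t) Δ).add_const y
  have := (hdiff (t • Δ + y)).hasFDerivAt.comp_hasDerivAt t hc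
  simpa [InnerProductSpace.toDual_apply_apply, Function.comp_def] using this

private lemma grad_ineq (h : V → ℝ) (h' : V → V)
    (hconv : ConvexOn ℝ univ h) (hdiff : ∀ z, HasGradientAt h (h' z) z) (y u : V) :
    h y + ⟪h' y, u - y⟫ ≤ h u := by
  set Δ := u - y with hΔ
  set φ : ℝ → ℝ := fun s => h (s • Δ + y) with hφ
  have hconvφ : ConvexOn ℝ univ φ := by
    have h0 := hconv.comp_affineMap (AffineMap.lineMap y u : ℝ →ᵃ[ℝ] V)
    have heq : φ = h ∘ (AffineMap.lineMap y u : ℝ →ᵃ[ℝ] V) := by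
      funext s
      simp [hφ, AffineMap.lineMap_apply_module', hΔ]
    rw [heq]
    simpa using h0
  have hd : HasDerivAt φ ⟪h' ((0:ℝ) • Δ + y), Δ⟫ 0 := line_hasDerivAt h h' hdiff y Δ 0
  have h00 : ((0:ℝ) • Δ + y) = y := by simp
  rw [h00] at hd
  have hslope := hconvφ.le_slope_of_hasDerivAt (mem_univ (0:ℝ)) (mem_univ (1:ℝ)) one_pos hd
  have h0 : φ 0 = h y := by simp [hφ]
  have h1 : φ 1 = h u := by simp [hφ, hΔ]
  have hs : slope φ 0 1 = φ 1 - φ 0 := by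
    rw [slope_def_field]; simp
  rw [hs, h0, h1] at hslope
  linarith

private lemma descent_lemma (h : V → ℝ) (h' : V → V) {L : ℝ} (hL : 0 < L)
    (hdiff : ∀ z, HasGradientAt h (h' z) z)
    (hlip : ∀ z w, ‖h' z - h' w‖ ≤ L * ‖z - w‖) (y u : V) :
    h u ≤ h y + ⟪h' y, u - y⟫ + L / 2 * ‖u - y‖ ^ 2 := by
  set Δ := u - y with hΔ
  set ψ : ℝ → ℝ := fun t => h (t • Δ + y) - t * ⟪h' y, Δ⟫ - t ^ 2 * (L / 2 * ‖Δ‖ ^ 2) with hψ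
  set ψ' : ℝ → ℝ := fun t => ⟪h' (t • Δ + y), Δ⟫ - ⟪h' y, Δ⟫ - 2 * t * (L / 2 * ‖Δ‖ ^ 2)
    with hψ'
  have hψd : ∀ t : ℝ, HasDerivAt ψ (ψ' t) t := by
    intro t
    have h1 : HasDerivAt (fun s : ℝ => h (s • Δ + y)) ⟪h' (t • Δ + y), Δ⟫ t :=
      line_hasDerivAt h h' hdiff y Δ t
    have h2 : HasDerivAt (fun s : ℝ => s * ⟪h' y, Δ⟫) ⟪h' y, Δ⟫ t := by
      simpa using (hasDerivAt_id t).mul_const ⟪h' y, Δ⟫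
    have h3 : HasDerivAt (fun s : ℝ => s ^ 2 * (L / 2 * ‖Δ‖ ^ 2))
        (2 * t * (L / 2 * ‖Δ‖ ^ 2)) t := by
      have := (hasDerivAt_pow 2 t).mul_const (L / 2 * ‖Δ‖ ^ 2)
      simpa [pow_one] using this
    exact (h1.sub h2).sub h3
  have anti : AntitoneOn ψ (Icc (0:ℝ) 1) := by
    apply antitoneOn_of_hasDerivWithinAt_nonpos (convex_Icc (0:ℝ) 1)
      (fun t _ => (hψd t).continuousAt.continuousWithinAt)
      (fun t _ => (hψd t).hasDerivWithinAt)
    intro t ht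
    rw [interior_Icc] at ht
    have ht0 : (0:ℝ) < t := ht.1
    have i1 : ⟪h' (t • Δ + y) - h' y, Δ⟫ ≤ ‖h' (t • Δ + y) - h' y‖ * ‖Δ‖ :=
      real_inner_le_norm _ _
    have i2 : ‖h' (t • Δ + y) - h' y‖ ≤ L * (t * ‖Δ‖) := by
      have hlp := hlip (t • Δ + y) y
      have he : (t • Δ + y) - y = t • Δ := by abel
      rw [he, norm_smul] at hlp
      simpa [abs_of_pos ht0, mul_assoc] using hlp
    have i3 : ⟪h' (t • Δ + y) - h' y, Δ⟫ = ⟪h' (t • Δ + y), Δ⟫ - ⟪h' y, Δ⟫ :=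
      inner_sub_left _ _ _
    have hn : (0:ℝ) ≤ ‖Δ‖ := norm_nonneg _
    have i4 : ‖h' (t • Δ + y) - h' y‖ * ‖Δ‖ ≤ L * (t * ‖Δ‖) * ‖Δ‖ :=
      mul_le_mul_of_nonneg_right i2 hn
    simp only [hψ']
    nlinarith [i1, i3, i4]
  have key := anti (left_mem_Icc.mpr zero_le_one) (right_mem_Icc.mpr zero_le_one) zero_le_one
  have h0 : ψ 0 = h y := by simp [hψ]
  have h1 : ψ 1 = h u - ⟪h' y, Δ⟫ - L / 2 * ‖Δ‖ ^ 2 := by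
    have he : (1:ℝ) • Δ + y = u := by simp [hΔ]
    simp only [hψ]
    rw [he]
    ring
  rw [h0, h1] at key
  linarith

private lemma coco (h : V → ℝ) (h' : V → V) {L : ℝ} (hL : 0 < L)
    (hconv : ConvexOn ℝ univ h) (hdiff : ∀ z, HasGradientAt h (h' z) z)
    (hlip : ∀ z w, ‖h' z - h' w‖ ≤ L * ‖z - w‖) (y u : V) :
    h y + ⟪h' y, u - y⟫ + 1 / (2 * L) * ‖h' u - h' y‖ ^ 2 ≤ h u := by
  set δ := h' u - h' y with hδ
  set z0 := u - L⁻¹ • δ with hz0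
  have d1 : h z0 ≤ h u + ⟪h' u, z0 - u⟫ + L / 2 * ‖z0 - u‖ ^ 2 :=
    descent_lemma h h' hL hdiff hlip u z0
  have d2 : h y + ⟪h' y, z0 - y⟫ ≤ h z0 := grad_ineq h h' hconv hdiff y z0
  have hz : z0 - u = -(L⁻¹ • δ) := by rw [hz0]; abel
  have e1 : ⟪h' u, z0 - u⟫ = -(L⁻¹ * ⟪h' u, δ⟫) := by
    rw [hz, inner_neg_right, real_inner_smul_right]
  have e2 : L / 2 * ‖z0 - u‖ ^ 2 = 1 / (2 * L) * ‖δ‖ ^ 2 := by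
    rw [hz, norm_neg, norm_smul, Real.norm_eq_abs, abs_of_pos (inv_pos.mpr hL)]
    field_simp
  have e3 : ⟪h' y, z0 - y⟫ = ⟪h' y, u - y⟫ - L⁻¹ * ⟪h' y, δ⟫ := by
    have hzz : z0 - y = (u - y) - L⁻¹ • δ := by rw [hz0]; abel
    rw [hzz, inner_sub_right, real_inner_smul_right]
  have e4 : ⟪h' u, δ⟫ - ⟪h' y, δ⟫ = ‖δ‖ ^ 2 := by
    rw [← inner_sub_left, ← hδ, real_inner_self_eq_norm_sq]
  have e5 : L⁻¹ * ⟪h' u, δ⟫ - L⁻¹ * ⟪h' y, δ⟫ = L⁻¹ * ‖δ‖ ^ 2 := by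
    rw [← mul_sub, e4]
  have e6 : L⁻¹ * ‖δ‖ ^ 2 - 1 / (2 * L) * ‖δ‖ ^ 2 = 1 / (2 * L) * ‖δ‖ ^ 2 := by
    field_simp
    ring
  rw [e1, e2] at d1
  rw [e3] at d2
  linarith

private lemma key_identity (a b c μ : ℝ) (hc : c = a * b) (u1 u2 u3 u4 A B : V)
    (hA : A = (a * μ) • (u2 - u4) - c • (u4 - u3))
    (hB : B = c • (u3 - u2) - b • (u2 - u1)) :
    2 * c * ⟪A, u2⟫ - c * a * μ * ‖u2‖ ^ 2 + 2 * b * ⟪A, u2 - u1⟫ - ‖A - B‖ ^ 2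
      + c * (c + a * μ) * ‖u4‖ ^ 2 - c ^ 2 * ‖u3‖ ^ 2
      = -((a * μ) ^ 2 + c * a * μ) * ‖u2 - u4‖ ^ 2 - ‖B‖ ^ 2 := by
  subst hc hA hB
  simp only [← real_inner_self_eq_norm_sq, inner_sub_left, inner_sub_right,
    real_inner_smul_left, real_inner_smul_right]
  simp only [real_inner_comm u2 u1, real_inner_comm u3 u1, real_inner_comm u4 u1,
    real_inner_comm u3 u2, real_inner_comm u4 u2, real_inner_comm u4 u3]
  ring

end Aux

/-- One-step contraction `L_{k+1} ≤ L_k/(1+α_k)` for the splitting HNAG scheme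
(Algorithm 2) applied to the composite objective `f = h + g`, where `h` is convex
with `L`-Lipschitz gradient, `g` is convex, `f` is `μ`-convex in the subgradient
sense, `α_k = √(γ_k/L)`, `β_k = 1/(Lα_k)` and `p_{k+1} ∈ ∂g(x_{k+1})`. -/
theorem splitting_hnag_one_step_contraction
    {V : Type*} [NormedAddCommGroup V] [InnerProductSpace ℝ V] [CompleteSpace V]
    (μ L : ℝ) (hμ : 0 ≤ μ) (hL : 0 < L)
    (h g f : V → ℝ) (h' : V → V)
    (hconvh : ConvexOn ℝ Set.univ h)
    (hdiffh : ∀ z, HasGradientAt h (h' z) z)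
    (hlip : ∀ z w : V, ‖h' z - h' w‖ ≤ L * ‖z - w‖)
    (hconvg : ConvexOn ℝ Set.univ g)
    (hf : ∀ z, f z = h z + g z)
    (hfconv : ∀ z w q : V, (∀ u, f u ≥ f w + ⟪q, u - w⟫) →
      f z - f w - ⟪q, z - w⟫ ≥ μ / 2 * ‖z - w‖ ^ 2)
    (xstar : V) (hmin : ∀ z, f xstar ≤ f z)
    (x v p : ℕ → V) (γ α β : ℕ → ℝ) (hγ0 : 0 < γ 0)
    (hαdef : ∀ k, α k = Real.sqrt (γ k / L)) (hβ : ∀ k, β k = 1 / (L * α k))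
    (hp : ∀ k, ∀ u, g u ≥ g (x (k + 1)) + ⟪p (k + 1), u - x (k + 1)⟫)
    (h1 : ∀ k, (α k)⁻¹ • (x (k + 1) - x k)
        = v k - x (k + 1) - β k • (h' (x k) + p (k + 1)))
    (h2 : ∀ k, (α k)⁻¹ • (v (k + 1) - v k)
        = (μ / γ k) • (x (k + 1) - v (k + 1))
          - (1 / γ k) • (h' (x (k + 1)) + p (k + 1)))
    (h3 : ∀ k, (γ (k + 1) - γ k) / α k = μ - γ (k + 1))
    (k : ℕ) :
    (f (x (k + 1)) - f xstar + γ (k + 1) / 2 * ‖v (k + 1) - xstar‖ ^ 2)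
      ≤ (f (x k) - f xstar + γ k / 2 * ‖v k - xstar‖ ^ 2) / (1 + α k) := by
  -- positivity of γ along the iteration
  have hγpos : ∀ n, 0 < γ n := by
    intro n
    induction n with
    | zero => exact hγ0
    | succ m ih =>
      have ham : 0 < α m := by
        rw [hαdef m]; exact Real.sqrt_pos.mpr (div_pos ih hL)
      have h3' := h3 m
      rw [div_eq_iff ham.ne'] at h3'
      have heq : γ (m + 1) * (1 + α m) = γ m + α m * μ := by linear_combination h3'
      have hpos : 0 < γ m + α m * μ := by
        have := mul_nonneg ham.le hμ; linarith
      have h1p : (0:ℝ) < 1 + α m := by linarith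
      nlinarith [heq]
  have hγk : 0 < γ k := hγpos k
  have ha : 0 < α k := by
    rw [hαdef k]; exact Real.sqrt_pos.mpr (div_pos hγk hL)
  have hLa2 : L * α k ^ 2 = γ k := by
    rw [hαdef k, Real.sq_sqrt (div_pos hγk hL).le]
    field_simp
  set a := α k with hadef
  set c := γ k with hcdef
  set b := L * a with hbdef
  have hb : 0 < b := mul_pos hL ha
  have hcab : c = a * b := by rw [hbdef, ← hLa2]; ring
  set z := xstar with hzdef
  set X := x k with hXdef
  set X' := x (k + 1) with hX'def
  set W := v k with hWdef
  set W' := v (k + 1) with hW'def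
  set P := p (k + 1) with hPdef
  set Q : V := h' X' + P with hQdef
  set S : V := h' X + P with hSdef
  set u1 := X - z with hu1
  set u2 := X' - z with hu2
  set u3 := W - z with hu3
  set u4 := W' - z with hu4
  -- Q is a subgradient of f at X'
  have hQsub : ∀ u, f u ≥ f X' + ⟪Q, u - X'⟫ := by
    intro u
    have hg1 := hp k u
    have hh1 := grad_ineq h h' hconvh hdiffh X' u
    rw [hf u, hf X', hQdef, inner_add_left]
    linarith
  -- μ-convexity toward xstar
  have IA := hfconv z X' Q hQsub
  have IA2 : f X' - f z ≤ ⟪Q, u2⟫ - μ / 2 * ‖u2‖ ^ 2 := by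
    have hn : ‖z - X'‖ = ‖u2‖ := by rw [hu2]; exact norm_sub_rev _ _
    have hi : ⟪Q, z - X'⟫ = -⟪Q, u2⟫ := by
      rw [show z - X' = -(u2) by rw [hu2]; abel, inner_neg_right]
    rw [hn, hi] at IA
    linarith
  -- cocoercivity bound
  have IC : f X' - f X ≤ ⟪Q, u2 - u1⟫ - 1 / (2 * L) * ‖S - Q‖ ^ 2 := by
    have hcoco := coco h h' hL hconvh hdiffh hlip X' X
    have hg2 := hp k X
    have hSQ : h' X - h' X' = S - Q := by rw [hSdef, hQdef]; abel
    rw [hSQ] at hcoco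
    have hi : ⟪Q, u2 - u1⟫ = -(⟪h' X', X - X'⟫ + ⟪P, X - X'⟫) := by
      have h21 : u2 - u1 = -(X - X') := by rw [hu1, hu2]; abel
      rw [h21, inner_neg_right, hQdef, inner_add_left]
    rw [hf X', hf X, hi]
    linarith
  -- vector relation for a • Q
  have hA : a • Q = (a * μ) • (u2 - u4) - c • (u4 - u3) := by
    have e2 := h2 k
    have e2' : W' - W = a • ((μ / c) • (X' - W') - (1 / c) • Q) := by
      rw [← e2, smul_inv_smul₀ ha.ne']
    have h43 : u4 - u3 = W' - W := by rw [hu3, hu4]; abel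
    have h24 : u2 - u4 = X' - W' := by rw [hu2, hu4]; abel
    rw [h43, h24, e2']
    match_scalars <;> field_simp <;> ring
  -- vector relation for a • S
  have hB : a • S = c • (u3 - u2) - b • (u2 - u1) := by
    have e1 := h1 k
    have e1' : X' - X = a • (W - X' - β k • S) := by
      rw [← e1, smul_inv_smul₀ ha.ne']
    have h32 : u3 - u2 = W - X' := by rw [hu2, hu3]; abel
    have h21 : u2 - u1 = X' - X := by rw [hu1, hu2]; abel
    rw [h32, h21, e1', hβ k, ← hadef, hbdef, ← hLa2]
    match_scalars <;> field_simp <;> ring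
  clear_value a c b z X X' W W' P Q S u1 u2 u3 u4
  -- scaled key inequality
  have keyid := key_identity (V := V) a b c μ hcab u1 u2 u3 u4 (a • Q) (a • S) hA hB
  have key2np : 2 * c * ⟪a • Q, u2⟫ - c * a * μ * ‖u2‖ ^ 2 + 2 * b * ⟪a • Q, u2 - u1⟫
      - ‖a • Q - a • S‖ ^ 2 + c * (c + a * μ) * ‖u4‖ ^ 2 - c ^ 2 * ‖u3‖ ^ 2 ≤ 0 := by
    rw [keyid]
    have n1 : (0:ℝ) ≤ ‖u2 - u4‖ ^ 2 := by positivity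
    have n2 : (0:ℝ) ≤ ‖a • S‖ ^ 2 := by positivity
    have n3 : (0:ℝ) ≤ c * a * μ := by positivity
    nlinarith [sq_nonneg (a * μ), mul_nonneg n3 n1, mul_nonneg (sq_nonneg (a * μ)) n1]
  have eQ2 : ⟪a • Q, u2⟫ = a * ⟪Q, u2⟫ := real_inner_smul_left _ _ _
  have eQ21 : ⟪a • Q, u2 - u1⟫ = a * ⟪Q, u2 - u1⟫ := real_inner_smul_left _ _ _
  have eAB : ‖a • Q - a • S‖ ^ 2 = a ^ 2 * ‖S - Q‖ ^ 2 := by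
    rw [← smul_sub, norm_smul, Real.norm_eq_abs, abs_of_pos ha, mul_pow, norm_sub_rev]
  rw [eQ2, eQ21, eAB] at key2np
  -- unscaled key inequality
  have keyle : a * ⟪Q, u2⟫ - a * μ / 2 * ‖u2‖ ^ 2 + ⟪Q, u2 - u1⟫
      - 1 / (2 * L) * ‖S - Q‖ ^ 2 + (c + a * μ) / 2 * ‖u4‖ ^ 2 - c / 2 * ‖u3‖ ^ 2 ≤ 0 := by
    have h2c : (0:ℝ) < 2 * c := by positivity
    have hscale : (2 * c) * (a * ⟪Q, u2⟫ - a * μ / 2 * ‖u2‖ ^ 2 + ⟪Q, u2 - u1⟫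
        - 1 / (2 * L) * ‖S - Q‖ ^ 2 + (c + a * μ) / 2 * ‖u4‖ ^ 2 - c / 2 * ‖u3‖ ^ 2)
        = 2 * c * (a * ⟪Q, u2⟫) - c * a * μ * ‖u2‖ ^ 2 + 2 * b * (a * ⟪Q, u2 - u1⟫)
          - a ^ 2 * ‖S - Q‖ ^ 2 + c * (c + a * μ) * ‖u4‖ ^ 2 - c ^ 2 * ‖u3‖ ^ 2 := by
      rw [hcab, hbdef]
      field_simp
    have hfin : (2 * c) * (a * ⟪Q, u2⟫ - a * μ / 2 * ‖u2‖ ^ 2 + ⟪Q, u2 - u1⟫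
        - 1 / (2 * L) * ‖S - Q‖ ^ 2 + (c + a * μ) / 2 * ‖u4‖ ^ 2 - c / 2 * ‖u3‖ ^ 2)
        ≤ (2 * c) * 0 := by
      rw [mul_zero, hscale]
      linarith [key2np]
    exact le_of_mul_le_mul_left hfin h2c
  -- assemble
  have h3k := h3 k
  rw [← hadef, ← hcdef] at h3k
  rw [div_eq_iff ha.ne'] at h3k
  have hgam : γ (k + 1) * (1 + a) = c + a * μ := by linear_combination h3k
  rw [le_div_iff₀ (by linarith : (0:ℝ) < 1 + a)]
  have expand : (f X' - f z + γ (k + 1) / 2 * ‖u4‖ ^ 2) * (1 + a)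
      = (f X' - f z) + a * (f X' - f z) + (c + a * μ) / 2 * ‖u4‖ ^ 2 := by
    linear_combination (‖u4‖ ^ 2 / 2) * hgam
  rw [expand]
  have IAa : a * (f X' - f z) ≤ a * (⟪Q, u2⟫ - μ / 2 * ‖u2‖ ^ 2) :=
    mul_le_mul_of_nonneg_left IA2 ha.le
  nlinarith [IAa, IC, keyle]
end
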